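/- arXiv:1505.07253 — 5 statements merged into one kernel-verified Lean document; each statement's English description precedes it below -/
import Mathlib

section
/- Define the generalized Cauchy numbers 𝒞_i^{(k)} := i!·[t^i] (t/log(1+t))^k over ℚ. Then for all n ≥ k ≥ 1, the Stirling numbers of the second kind satisfy S(n,k) = C(n,k) · Σ_{i=0}^{n−k} 𝒞_i^{(k)} · S(n−k, i). -/
open PowerSeries Finset

/-- Stirling numbers of the second kind. -/
def stirling2 : ℕ → ℕ → ℕ
  | 0, 0 => 1
  | 0, _ + 1 => 0
  | _ + 1, 0 => 0
  | n + 1, k + 1 => (k + 1) * stirling2 n (k + 1) + stirling2 n k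

lemma stirling2_succ (n k : ℕ) :
    stirling2 (n+1) (k+1) = (k + 1) * stirling2 n (k+1) + stirling2 n k := rfl

lemma stirling2_zero_right (n : ℕ) : stirling2 (n+1) 0 = 0 := rfl

lemma stirling2_eq_zero_of_lt : ∀ {n k : ℕ}, n < k → stirling2 n k = 0
  | 0, k+1, _ => rfl
  | n+1, k+1, h => by
    rw [stirling2_succ, stirling2_eq_zero_of_lt (by omega),
      stirling2_eq_zero_of_lt (by omega)]
    simp

noncomputable def Egf : PowerSeries ℚ := PowerSeries.exp ℚ - 1

lemma coeff_Egf (n : ℕ) :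
    PowerSeries.coeff n Egf = 1 / n.factorial - if n = 0 then 1 else 0 := by
  simp [Egf, PowerSeries.coeff_exp, PowerSeries.coeff_one]

lemma derivative_Egf : d⁄dX ℚ Egf = Egf + 1 := by
  ext n
  rw [PowerSeries.coeff_derivative, coeff_Egf]
  simp only [map_add, coeff_Egf, PowerSeries.coeff_one, Nat.succ_ne_zero, if_false]
  rw [Nat.factorial_succ]
  push_cast
  have h1 : (n.factorial : ℚ) ≠ 0 := Nat.cast_ne_zero.2 n.factorial_ne_zero
  have h2 : ((n:ℚ) + 1) ≠ 0 := by positivity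
  field_simp
  ring

lemma derivative_Egf_pow (k : ℕ) :
    d⁄dX ℚ (Egf ^ (k+1)) = ((k:ℚ)+1) • (Egf ^ (k+1) + Egf ^ k) := by
  rw [Derivation.leibniz_pow, derivative_Egf, Nat.add_sub_cancel]
  rw [PowerSeries.smul_eq_C_mul, map_add, map_one, map_natCast]
  simp only [smul_eq_mul]
  push_cast
  ring

lemma coeff_Egf_pow : ∀ (n k : ℕ),
    PowerSeries.coeff n (Egf ^ k) =
      (k.factorial : ℚ) * (stirling2 n k : ℚ) / (n.factorial : ℚ) := by
  intro n
  induction n with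
  | zero =>
    intro k
    rw [PowerSeries.coeff_zero_eq_constantCoeff, map_pow]
    have h0 : constantCoeff Egf = 0 := by
      rw [← PowerSeries.coeff_zero_eq_constantCoeff, coeff_Egf]; simp
    rw [h0]
    cases k with
    | zero => simp [stirling2]
    | succ k => simp [stirling2, zero_pow]
  | succ n ih =>
    intro k
    cases k with
    | zero => simp [stirling2_zero_right, pow_zero, PowerSeries.coeff_one]
    | succ k =>
      have hd := congrArg (PowerSeries.coeff n) (derivative_Egf_pow k)
      rw [PowerSeries.coeff_derivative] at hd
      rw [map_smul, map_add, ih, ih, smul_eq_mul] at hd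
      have hne : ((n:ℚ)+1) ≠ 0 := by positivity
      have h2 : PowerSeries.coeff (n+1) (Egf ^ (k+1)) =
          ((k:ℚ)+1) * ((k+1).factorial * stirling2 n (k+1) / n.factorial
            + k.factorial * stirling2 n k / n.factorial) / ((n:ℚ)+1) := by
        field_simp at hd ⊢
        linarith [hd]
      rw [h2, stirling2_succ]
      have h1 : (n.factorial : ℚ) ≠ 0 := Nat.cast_ne_zero.2 n.factorial_ne_zero
      have h3 : ((k+1).factorial : ℚ) = ((k:ℚ)+1) * k.factorial := by
        rw [Nat.factorial_succ]; push_cast; ring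
      have h4 : ((n+1).factorial : ℚ) = ((n:ℚ)+1) * n.factorial := by
        rw [Nat.factorial_succ]; push_cast; ring
      rw [h3, h4]
      push_cast
      field_simp

lemma coeff_Egf_pow_eq_zero {n k : ℕ} (h : n < k) : PowerSeries.coeff n (Egf ^ k) = 0 := by
  rw [coeff_Egf_pow, stirling2_eq_zero_of_lt h]
  simp

lemma coeff_aeval_zero {P : Polynomial ℚ} {m : ℕ} (h : ∀ j ≤ m, P.coeff j = 0) :
    PowerSeries.coeff m (Polynomial.aeval Egf P) = 0 := by
  rw [Polynomial.aeval_eq_sum_range, map_sum]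
  refine Finset.sum_eq_zero fun i _ => ?_
  rcases le_or_gt i m with h1 | h1
  · rw [h i h1, zero_smul, map_zero]
  · rw [map_smul, coeff_Egf_pow_eq_zero h1, smul_zero]

/-- Substitution of `Egf` into `f`, coefficientwise. -/
noncomputable def Phi (f : PowerSeries ℚ) : PowerSeries ℚ :=
  PowerSeries.mk fun m => ∑ i ∈ Finset.range (m+1),
    PowerSeries.coeff i f * PowerSeries.coeff m (Egf ^ i)

lemma coeff_Phi (f : PowerSeries ℚ) (m : ℕ) :
    PowerSeries.coeff m (Phi f) = ∑ i ∈ Finset.range (m+1),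
      PowerSeries.coeff i f * PowerSeries.coeff m (Egf ^ i) := coeff_mk m _

lemma coeff_Phi_eq_aeval (f : PowerSeries ℚ) {m N : ℕ} (h : m < N) :
    PowerSeries.coeff m (Phi f) =
      PowerSeries.coeff m (Polynomial.aeval Egf (trunc N f)) := by
  obtain ⟨N, rfl⟩ : ∃ N', N = N' + 1 := ⟨N - 1, by omega⟩
  rw [coeff_Phi, Polynomial.aeval_eq_sum_range' (natDegree_trunc_lt f N), map_sum]
  rw [← Finset.sum_subset (Finset.range_subset_range.2 (by omega : m + 1 ≤ N + 1))]
  · refine Finset.sum_congr rfl fun i hi => ?_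
    have hi' := Finset.mem_range.1 hi
    rw [map_smul, coeff_trunc, if_pos (by omega : i < N + 1), smul_eq_mul]
  · intro i _ hi
    rw [map_smul, coeff_Egf_pow_eq_zero (by simp at hi; omega), smul_zero]

lemma Phi_mul (f g : PowerSeries ℚ) : Phi (f * g) = Phi f * Phi g := by
  ext m
  rw [PowerSeries.coeff_mul]
  have hr : ∑ p ∈ Finset.HasAntidiagonal.antidiagonal m,
      PowerSeries.coeff p.1 (Phi f) * PowerSeries.coeff p.2 (Phi g) =
      ∑ p ∈ Finset.HasAntidiagonal.antidiagonal m,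
      PowerSeries.coeff p.1 (Polynomial.aeval Egf (trunc (m+1) f)) *
        PowerSeries.coeff p.2 (Polynomial.aeval Egf (trunc (m+1) g)) := by
    refine Finset.sum_congr rfl fun p hp => ?_
    rw [Finset.HasAntidiagonal.mem_antidiagonal] at hp
    rw [coeff_Phi_eq_aeval f (by omega : p.1 < m + 1),
      coeff_Phi_eq_aeval g (by omega : p.2 < m + 1)]
  rw [hr, ← PowerSeries.coeff_mul, ← map_mul,
    coeff_Phi_eq_aeval (f * g) (Nat.lt_succ_self m)]
  have key : ∀ j ≤ m, ((trunc (m+1) f * trunc (m+1) g) - trunc (m+1) (f * g)).coeff j = 0 := by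
    intro j hj
    have h2 : PowerSeries.coeff j (f * g) = (trunc (m+1) f * trunc (m+1) g).coeff j := by
      rw [coeff_mul_eq_coeff_trunc_mul_trunc f g (show j < m+1 by omega),
        ← Polynomial.coe_mul, Polynomial.coeff_coe]
    rw [Polynomial.coeff_sub, coeff_trunc, if_pos (show j < m + 1 by omega), h2, sub_self]
  have := coeff_aeval_zero key
  rw [map_sub, map_sub] at this
  linarith

lemma Phi_one : Phi 1 = 1 := by
  ext m
  rw [coeff_Phi]
  rw [Finset.sum_eq_single 0]
  · simp
  · intro i _ hi
    rw [PowerSeries.coeff_one, if_neg hi, zero_mul]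
  · intro h; simp at h

lemma Phi_X : Phi PowerSeries.X = Egf := by
  ext m
  rw [coeff_Phi]
  rw [Finset.sum_eq_single 1]
  · rcases Nat.eq_zero_or_pos m with rfl | hm
    · simp [PowerSeries.coeff_X, coeff_Egf]
    · rw [PowerSeries.coeff_X, if_pos rfl, one_mul, pow_one]
  · intro i _ hi
    rw [PowerSeries.coeff_X, if_neg hi, zero_mul]
  · intro h
    simp only [Finset.mem_range, not_lt] at h
    have : m = 0 := by omega
    subst this
    simp [coeff_Egf]

/-- The key combinatorial identity: `Σ_j (-1)^j j! S(m,j+1) = [m = 1]` (i.e. `log∘exp = id`). -/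
lemma alt_sum_stirling : ∀ m : ℕ,
    ∑ j ∈ Finset.range m, ((-1 : ℚ))^j * (j.factorial : ℚ) * (stirling2 m (j+1) : ℚ) =
      if m = 1 then 1 else 0
  | 0 => by simp
  | 1 => by simp [stirling2]
  | (m+2) => by
    rw [if_neg (by omega)]
    have expand : ∀ j, (stirling2 (m+2) (j+1) : ℚ) =
        (j+1) * stirling2 (m+1) (j+1) + stirling2 (m+1) j := by
      intro j; rw [stirling2_succ]; push_cast; ring
    calc ∑ j ∈ Finset.range (m+2), ((-1:ℚ))^j * j.factorial * (stirling2 (m+2) (j+1) : ℚ)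
        = (∑ j ∈ Finset.range (m+2), ((-1:ℚ))^j * ((j+1) * j.factorial) *
            (stirling2 (m+1) (j+1) : ℚ))
          + ∑ j ∈ Finset.range (m+2), ((-1:ℚ))^j * j.factorial * (stirling2 (m+1) j : ℚ) := by
          rw [← Finset.sum_add_distrib]
          refine Finset.sum_congr rfl fun j _ => ?_
          rw [expand j]; ring
      _ = 0 := by
          have hA : ∑ j ∈ Finset.range (m+2), ((-1:ℚ))^j * ((j+1) * j.factorial) *
              (stirling2 (m+1) (j+1) : ℚ)
              = ∑ j ∈ Finset.range (m+1), ((-1:ℚ))^j * ((j+1) * j.factorial) *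
              (stirling2 (m+1) (j+1) : ℚ) := by
            rw [Finset.sum_range_succ, stirling2_eq_zero_of_lt (by omega)]
            push_cast
            ring
          have hB : ∑ j ∈ Finset.range (m+2), ((-1:ℚ))^j * j.factorial * (stirling2 (m+1) j : ℚ)
              = ∑ j ∈ Finset.range (m+1), -(((-1:ℚ))^j * ((j+1) * j.factorial) *
              (stirling2 (m+1) (j+1) : ℚ)) := by
            rw [Finset.sum_range_succ']
            have h0 : (stirling2 (m+1) 0 : ℚ) = 0 := by simp [stirling2_zero_right]
            rw [h0, mul_zero, add_zero]
            refine Finset.sum_congr rfl fun j _ => ?_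
            rw [Nat.factorial_succ]
            push_cast
            ring
          rw [hA, hB, ← Finset.sum_add_distrib]
          refine Finset.sum_eq_zero fun j _ => ?_
          ring

/-- `log(1+t)/t = Σ_{m≥0} (-1)^m t^m/(m+1)` as a formal power series over `ℚ`. -/
noncomputable def logSeriesDivT : PowerSeries ℚ :=
  PowerSeries.mk fun m => (-1 : ℚ) ^ m / (m + 1)

/-- The generalized Cauchy numbers: `𝒞_i^{(k)} = i!·[t^i](t/log(1+t))^k`. -/
noncomputable def cauchyNumGen (i k : ℕ) : ℚ :=
  (i.factorial : ℚ) * PowerSeries.coeff i (logSeriesDivT⁻¹ ^ k)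

lemma Phi_LX : Phi (logSeriesDivT * PowerSeries.X) = PowerSeries.X := by
  ext m
  rw [coeff_Phi, Finset.sum_range_succ', PowerSeries.coeff_zero_mul_X, zero_mul, add_zero]
  have ht : ∀ i, PowerSeries.coeff (i+1) (logSeriesDivT * PowerSeries.X) *
      PowerSeries.coeff m (Egf ^ (i+1))
      = ((-1:ℚ))^i * (i.factorial : ℚ) * (stirling2 m (i+1) : ℚ) / (m.factorial : ℚ) := by
    intro i
    rw [PowerSeries.coeff_succ_mul_X, logSeriesDivT, coeff_mk, coeff_Egf_pow]
    have h1 : ((i+1).factorial : ℚ) = ((i:ℚ)+1) * (i.factorial : ℚ) := by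
      rw [Nat.factorial_succ]; push_cast; ring
    rw [h1]
    have hi : ((i:ℚ)+1) ≠ 0 := by positivity
    have hm : (m.factorial : ℚ) ≠ 0 := Nat.cast_ne_zero.2 m.factorial_ne_zero
    field_simp
  rw [Finset.sum_congr rfl fun i _ => ht i, ← Finset.sum_div, alt_sum_stirling,
    PowerSeries.coeff_X]
  rcases eq_or_ne m 1 with rfl | h
  · simp
  · simp [h]

lemma constantCoeff_logSeriesDivT : constantCoeff logSeriesDivT = 1 := by
  rw [← PowerSeries.coeff_zero_eq_constantCoeff, logSeriesDivT, coeff_mk]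
  norm_num

lemma key (k m : ℕ) :
    ∑ i ∈ Finset.range (m+1), PowerSeries.coeff i (logSeriesDivT⁻¹ ^ k) *
      PowerSeries.coeff m (Egf ^ i) = PowerSeries.coeff (m+k) (Egf ^ k) := by
  have h1 : logSeriesDivT⁻¹ * logSeriesDivT = 1 :=
    PowerSeries.inv_mul_cancel _ (by rw [constantCoeff_logSeriesDivT]; norm_num)
  have hA : Phi logSeriesDivT⁻¹ * PowerSeries.X = Egf := by
    calc Phi logSeriesDivT⁻¹ * PowerSeries.X
        = Phi logSeriesDivT⁻¹ * Phi (logSeriesDivT * PowerSeries.X) := by rw [Phi_LX]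
      _ = Phi (logSeriesDivT⁻¹ * (logSeriesDivT * PowerSeries.X)) := by rw [← Phi_mul]
      _ = Phi (logSeriesDivT⁻¹ * logSeriesDivT * PowerSeries.X) := by rw [mul_assoc]
      _ = Phi (1 * PowerSeries.X) := by rw [h1]
      _ = Egf := by rw [one_mul, Phi_X]
  have hPow : Phi (logSeriesDivT⁻¹ ^ k) = Phi logSeriesDivT⁻¹ ^ k := by
    induction k with
    | zero => simpa using Phi_one
    | succ k ih => rw [pow_succ, pow_succ, Phi_mul, ih]
  have h2 : Phi (logSeriesDivT⁻¹ ^ k) * PowerSeries.X ^ k = Egf ^ k := by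
    rw [hPow, ← mul_pow, hA]
  have h3 := congrArg (PowerSeries.coeff (m+k)) h2
  rw [PowerSeries.coeff_mul_X_pow] at h3
  rw [← h3, coeff_Phi]

/-- `S(n,k) = C(n,k)·Σ_{i=0}^{n-k} 𝒞_i^{(k)}·S(n-k,i)` for `n ≥ k ≥ 1`. -/
theorem stirling2_generalizedCauchy (n k : ℕ) (hk : 1 ≤ k) (hkn : k ≤ n) :
    (stirling2 n k : ℚ) =
      (n.choose k : ℚ) * ∑ i ∈ Finset.range (n - k + 1),
        cauchyNumGen i k * (stirling2 (n - k) i : ℚ) := by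
  set m := n - k with hm
  have hmk : m + k = n := Nat.sub_add_cancel hkn
  have hmf : (m.factorial : ℚ) ≠ 0 := Nat.cast_ne_zero.2 m.factorial_ne_zero
  have hkf : (k.factorial : ℚ) ≠ 0 := Nat.cast_ne_zero.2 k.factorial_ne_zero
  have hnf : (n.factorial : ℚ) ≠ 0 := Nat.cast_ne_zero.2 n.factorial_ne_zero
  have hsum : ∑ i ∈ Finset.range (m+1), cauchyNumGen i k * (stirling2 m i : ℚ)
      = (m.factorial : ℚ) * ((k.factorial : ℚ) * (stirling2 n k : ℚ) / (n.factorial : ℚ)) := by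
    calc ∑ i ∈ Finset.range (m+1), cauchyNumGen i k * (stirling2 m i : ℚ)
        = (m.factorial : ℚ) * ∑ i ∈ Finset.range (m+1),
            PowerSeries.coeff i (logSeriesDivT⁻¹ ^ k) * PowerSeries.coeff m (Egf ^ i) := by
          rw [Finset.mul_sum]
          refine Finset.sum_congr rfl fun i _ => ?_
          rw [cauchyNumGen, coeff_Egf_pow]
          field_simp
      _ = (m.factorial : ℚ) * PowerSeries.coeff (m+k) (Egf ^ k) := by rw [key]
      _ = (m.factorial : ℚ) * ((k.factorial : ℚ) * (stirling2 n k : ℚ) / (n.factorial : ℚ)) := by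
          rw [coeff_Egf_pow, hmk]
  rw [hsum, Nat.cast_choose ℚ hkn, ← hm]
  field_simp
end

section
/- For all natural numbers n ≥ k ≥ 0, the Stirling number of the second kind satisfies S(n,k) = C(n,k) · b_{n−k}^{(−k)}, where b_j^{(−k)} := j!·[t^j] ((e^t−1)/t)^k are the generalized Bernoulli numbers of negative order −k. -/
/-- `(e^t-1)/t = Σ_{m≥0} t^m/(m+1)!` as a formal power series over `ℚ`. -/
noncomputable def expSubOneDivT : PowerSeries ℚ :=
  PowerSeries.mk fun m => (1 : ℚ) / (m + 1).factorial

/-- The generalized Bernoulli numbers of negative order: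
`b_j^{(-k)} = j!·[t^j]((e^t-1)/t)^k`. -/
noncomputable def bernoulliNegOrder (j k : ℕ) : ℚ :=
  (j.factorial : ℚ) * PowerSeries.coeff j (expSubOneDivT ^ k)

open PowerSeries in
lemma derivative_exp' : d⁄dX ℚ (exp ℚ) = exp ℚ := by
  ext n
  rw [coeff_derivative, coeff_exp, coeff_exp]
  have h0 : ((n+1).factorial : ℚ) ≠ 0 := by exact_mod_cast (n+1).factorial_ne_zero
  have h1 : ((n).factorial : ℚ) ≠ 0 := by exact_mod_cast n.factorial_ne_zero
  simp only [Algebra.algebraMap_self, map_div₀, map_one, map_natCast, RingHom.id_apply]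
  rw [Nat.factorial_succ]
  push_cast
  field_simp

open PowerSeries in
lemma coeff_E_pow (n k : ℕ) :
    coeff n ((exp ℚ - 1) ^ k) =
      (k.factorial : ℚ) * stirling2 n k / n.factorial := by
  induction n generalizing k with
  | zero =>
    rw [coeff_zero_eq_constantCoeff, map_pow]
    have : constantCoeff (exp ℚ - 1) = 0 := by simp
    rw [this]
    cases k with
    | zero => simp [stirling2]
    | succ k => simp [stirling2, zero_pow]
  | succ n ih =>
    cases k with
    | zero =>
      simp [stirling2]
    | succ k =>
      have hD : d⁄dX ℚ ((exp ℚ - 1) ^ (k+1)) =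
          ((k:ℚ)+1) • ((exp ℚ - 1) ^ (k+1) + (exp ℚ - 1) ^ k) := by
        rw [Derivation.leibniz_pow]
        have hE : d⁄dX ℚ (exp ℚ - 1) = exp ℚ := by
          rw [map_sub, derivative_exp', Derivation.map_one_eq_zero, sub_zero]
        rw [hE, Nat.add_sub_cancel]
        simp only [smul_eq_mul, nsmul_eq_mul, smul_smul, PowerSeries.smul_eq_C_mul,
          map_add, map_natCast, map_one]
        push_cast
        ring
      have hco := congrArg (coeff n) hD
      rw [coeff_derivative, map_smul, map_add, ih, ih] at hco
      have hn1 : ((n:ℚ)+1) ≠ 0 := by positivity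
      have heq : coeff (n+1) ((exp ℚ - 1) ^ (k+1)) =
          (((k:ℚ)+1) * ((k+1).factorial * stirling2 n (k+1) / n.factorial
            + k.factorial * stirling2 n k / n.factorial)) / ((n:ℚ)+1) := by
        rw [smul_eq_mul] at hco
        rw [eq_div_iff hn1]
        linarith [hco]
      rw [heq]
      have hs : (stirling2 (n+1) (k+1) : ℚ)
          = (k+1) * stirling2 n (k+1) + stirling2 n k := by
        simp [stirling2]
      have hnf : ((n:ℚ)+1) * n.factorial = (n+1).factorial := by
        rw [Nat.factorial_succ]; push_cast; ring
      have hkf : ((k:ℚ)+1) * k.factorial = (k+1).factorial := by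
        rw [Nat.factorial_succ]; push_cast; ring
      have h1 : ((n).factorial : ℚ) ≠ 0 := by exact_mod_cast n.factorial_ne_zero
      have h2 : ((n+1).factorial : ℚ) ≠ 0 := by exact_mod_cast (n+1).factorial_ne_zero
      rw [hs, ← hnf, ← hkf]
      have h1' : ((k).factorial : ℚ) ≠ 0 := by exact_mod_cast k.factorial_ne_zero
      field_simp

open PowerSeries in
lemma expSubOneDivT_mul_X : expSubOneDivT * X = exp ℚ - 1 := by
  ext n
  cases n with
  | zero => simp [expSubOneDivT]
  | succ n =>
    rw [coeff_succ_mul_X]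
    simp [expSubOneDivT, coeff_exp, coeff_one]

open PowerSeries in
lemma coeff_expSubOneDivT_pow (j k : ℕ) :
    coeff j (expSubOneDivT ^ k) =
      (k.factorial : ℚ) * stirling2 (j + k) k / (j + k).factorial := by
  have : coeff j (expSubOneDivT ^ k) = coeff (j + k) ((exp ℚ - 1) ^ k) := by
    rw [← expSubOneDivT_mul_X, mul_pow, ← coeff_mul_X_pow (expSubOneDivT ^ k) k j]
  rw [this, coeff_E_pow]

/-- `S(n,k) = C(n,k)·b_{n-k}^{(-k)}` for `n ≥ k ≥ 0`. -/
theorem stirling2_eq_choose_mul_bernoulliNegOrder (n k : ℕ) (hkn : k ≤ n) :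
    (stirling2 n k : ℚ) = (n.choose k : ℚ) * bernoulliNegOrder (n - k) k := by
  unfold bernoulliNegOrder
  rw [coeff_expSubOneDivT_pow, Nat.sub_add_cancel hkn]
  have hfac : (n.choose k : ℚ) * k.factorial * (n - k).factorial = n.factorial := by
    exact_mod_cast congrArg (Nat.cast : ℕ → ℚ)
      (Nat.choose_mul_factorial_mul_factorial hkn)
  have h1 : ((n).factorial : ℚ) ≠ 0 := by exact_mod_cast n.factorial_ne_zero
  field_simp
  nlinarith [hfac]
end

section
/- Define generalized Catalan numbers C_i^{(m)} := [t^i] (2/(1+√(1−4t)))^m, where 2/(1+√(1−4t)) is the formal power series c(t) satisfying c(t) = 1 + t·c(t)^2 (the Catalan number generating function). Then for all integers m, n, k with n ≥ k ≥ 0 and 2k − n ≥ m ≥ 0, one has C(n,k) = Σ_{i=0}^{n−k} C_i^{(m)} · C(n−m−2i, k−m−i). -/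
open PowerSeries Finset

/-- Central binomial coefficient generating series. -/
noncomputable def catD : PowerSeries ℚ := PowerSeries.mk fun r => ((2 * r).choose r : ℚ)

lemma catAux_pow (c : PowerSeries ℚ) (hc : c = 1 + PowerSeries.X * c ^ 2) (m : ℕ) :
    c ^ (m + 1) = c ^ m + PowerSeries.X * c ^ (m + 2) := by
  have h : c ^ m * c = c ^ m * (1 + PowerSeries.X * c ^ 2) := by rw [← hc]
  rw [pow_succ, h]; ring

lemma catAux_const (c : PowerSeries ℚ) (hc : c = 1 + PowerSeries.X * c ^ 2) (m : ℕ) :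
    PowerSeries.coeff 0 (c ^ m) = 1 := by
  have h0 : PowerSeries.constantCoeff c = 1 := by
    rw [hc]; simp
  rw [PowerSeries.coeff_zero_eq_constantCoeff, map_pow, h0, one_pow]

lemma catAux_central (c : PowerSeries ℚ) (hc : c = 1 + PowerSeries.X * c ^ 2) :
    ∀ j m : ℕ, PowerSeries.coeff j (c ^ m * catD) = (((2 * j + m).choose j : ℕ) : ℚ) := by
  intro j
  induction j with
  | zero =>
    intro m
    rw [PowerSeries.coeff_zero_eq_constantCoeff, map_mul]
    have h1 : PowerSeries.constantCoeff (c ^ m) = 1 := by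
      rw [← PowerSeries.coeff_zero_eq_constantCoeff]; exact catAux_const c hc m
    have h2 : PowerSeries.constantCoeff catD = 1 := by
      rw [← PowerSeries.coeff_zero_eq_constantCoeff]
      simp [catD]
    rw [h1, h2]; simp
  | succ j ihj =>
    intro m
    induction m with
    | zero =>
      simp [catD]
    | succ m ihm =>
      rw [catAux_pow c hc m, add_mul, map_add, ihm, mul_assoc,
        PowerSeries.coeff_succ_X_mul, ihj (m + 2)]
      have key : (2 * (j + 1) + (m + 1)).choose (j + 1)
          = (2 * (j + 1) + m).choose (j + 1) + (2 * j + (m + 2)).choose j := by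
        have h := Nat.choose_succ_succ (2 * j + m + 2) j
        have e1 : 2 * (j + 1) + (m + 1) = (2 * j + m + 2) + 1 := by omega
        have e2 : 2 * (j + 1) + m = 2 * j + m + 2 := by omega
        have e3 : 2 * j + (m + 2) = 2 * j + m + 2 := by omega
        simp only [Nat.succ_eq_add_one] at h
        rw [e1, e2, e3, h, Nat.add_comm]
      rw [key]; push_cast; ring

lemma catAux_conv (c : PowerSeries ℚ) (j m : ℕ) :
    PowerSeries.coeff j (c ^ m * catD) =
      ∑ i ∈ Finset.range (j + 1),
        PowerSeries.coeff i (c ^ m) * (((2 * (j - i)).choose (j - i) : ℕ) : ℚ) := by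
  rw [PowerSeries.coeff_mul, Finset.Nat.sum_antidiagonal_eq_sum_range_succ_mk]
  refine Finset.sum_congr rfl fun i _ => ?_
  simp [catD]

/-- Pascal-array recurrence via generalized Catalan numbers: if `c` is the Catalan
generating function, characterized by `c = 1 + t·c²`, and
`C_i^{(m)} = [t^i] c^m`, then for `n ≥ k` and `0 ≤ m ≤ 2k - n`,
`C(n,k) = Σ_{i=0}^{n-k} C_i^{(m)} · C(n-m-2i, k-m-i)`. -/
theorem choose_eq_sum_catalanGen (c : PowerSeries ℚ)
    (hc : c = 1 + PowerSeries.X * c ^ 2)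
    (m n k : ℕ) (hkn : k ≤ n) (hm : m + n ≤ 2 * k) :
    (n.choose k : ℚ) =
      ∑ i ∈ Finset.range (n - k + 1),
        PowerSeries.coeff i (c ^ m) * ((n - m - 2 * i).choose (k - m - i) : ℚ) := by
  induction n using Nat.strong_induction_on generalizing k m with
  | _ n ih =>
    rcases eq_or_lt_of_le hkn with heq | hlt
    · -- k = n
      subst heq
      have h0 : k - k = 0 := by omega
      rw [h0]
      simp [catAux_const c hc m, Nat.choose_self]
    · -- k < n
      rcases eq_or_lt_of_le hm with hb | hlt2
      · -- boundary: m + n = 2k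
        have hrw : ∀ i ∈ Finset.range (n - k + 1),
            PowerSeries.coeff i (c ^ m) * ((n - m - 2 * i).choose (k - m - i) : ℚ)
            = PowerSeries.coeff i (c ^ m)
              * (((2 * ((n - k) - i)).choose ((n - k) - i) : ℕ) : ℚ) := by
          intro i hi
          rw [Finset.mem_range] at hi
          have e1 : n - m - 2 * i = 2 * ((n - k) - i) := by omega
          have e2 : k - m - i = (n - k) - i := by omega
          rw [e1, e2]
        rw [Finset.sum_congr rfl hrw, ← catAux_conv c (n - k) m,
          catAux_central c hc (n - k) m]
        have e3 : 2 * (n - k) + m = n := by omega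
        rw [e3, Nat.choose_symm hkn]
      · -- interior: m + n < 2k
        have hk1 : 1 ≤ k := by omega
        have hrw : ∀ i ∈ Finset.range (n - k + 1),
            PowerSeries.coeff i (c ^ m) * ((n - m - 2 * i).choose (k - m - i) : ℚ)
            = PowerSeries.coeff i (c ^ m)
                * (((n - 1) - m - 2 * i).choose ((k - 1) - m - i) : ℚ)
              + PowerSeries.coeff i (c ^ m)
                * (((n - 1) - m - 2 * i).choose (k - m - i) : ℚ) := by
          intro i hi
          rw [Finset.mem_range] at hi
          have ha : n - m - 2 * i = ((n - 1) - m - 2 * i) + 1 := by omega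
          have hb2 : k - m - i = ((k - 1) - m - i) + 1 := by omega
          have hch := Nat.choose_succ_succ ((n - 1) - m - 2 * i) ((k - 1) - m - i)
          simp only [Nat.succ_eq_add_one] at hch
          rw [ha, hb2, hch, ← hb2]
          push_cast
          ring
        rw [Finset.sum_congr rfl hrw, Finset.sum_add_distrib]
        have IH1 : ((n - 1).choose (k - 1) : ℚ) =
            ∑ i ∈ Finset.range ((n - 1) - (k - 1) + 1),
              PowerSeries.coeff i (c ^ m) * (((n - 1) - m - 2 * i).choose ((k - 1) - m - i) : ℚ) :=
          ih (n - 1) (by omega) m (k - 1) (by omega) (by omega)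
        have IH2 : ((n - 1).choose k : ℚ) =
            ∑ i ∈ Finset.range ((n - 1) - k + 1),
              PowerSeries.coeff i (c ^ m) * (((n - 1) - m - 2 * i).choose (k - m - i) : ℚ) :=
          ih (n - 1) (by omega) m k (by omega) (by omega)
        have er : (n - 1) - (k - 1) + 1 = n - k + 1 := by omega
        rw [er] at IH1
        -- second sum: extend IH2 range by one vanishing term
        have er2 : n - k + 1 = ((n - 1) - k + 1) + 1 := by omega
        have hzero : (((n - 1) - m - 2 * ((n - 1) - k + 1)).choose (k - m - ((n - 1) - k + 1)) : ℕ) = 0 := by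
          apply Nat.choose_eq_zero_of_lt
          omega
        have hsum2 : ∑ i ∈ Finset.range (n - k + 1),
            PowerSeries.coeff i (c ^ m) * (((n - 1) - m - 2 * i).choose (k - m - i) : ℚ)
            = ((n - 1).choose k : ℚ) := by
          rw [er2, Finset.sum_range_succ, hzero]
          simp [← IH2]
        rw [← IH1, hsum2]
        have : n.choose k = (n - 1).choose (k - 1) + (n - 1).choose k := by
          have hch := Nat.choose_succ_succ (n - 1) (k - 1)
          have e1 : n = (n - 1) + 1 := by omega
          have e2 : k = (k - 1) + 1 := by omega
          simp only [Nat.succ_eq_add_one] at hch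
          rw [← e1, ← e2] at hch
          exact hch
        rw [this]
        push_cast
        ring
end

section
/- Lagrange inversion (coefficient form): let g ∈ ℚ[[t]] with g(0) = 1 invertible, and let φ(t) = t·g(t), with compositional inverse φ^{⟨−1⟩}. Then for any f ∈ ℚ[[t]] and all n ≥ 1: n·[t^n] f(φ^{⟨−1⟩}(t)) = [t^{n−1}] f'(t)·(1/g(t))^n. -/
open PowerSeries

/-- Composition `f(u)` of formal power series, valid when `u` has zero constant
coefficient: then `coeff n (u^k) = 0` for `k > n`, so the `n`-th coefficient of
`f(u) = Σ_k (coeff k f)·u^k` only involves terms with `k ≤ n`. -/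
noncomputable def PowerSeries.comp' {R : Type*} [CommRing R] (f u : PowerSeries R) :
    PowerSeries R :=
  PowerSeries.mk fun n =>
    PowerSeries.coeff (R := R) n (∑ k ∈ Finset.range (n + 1), PowerSeries.C (R := R) (PowerSeries.coeff (R := R) k f) * u ^ k)


open PowerSeries Finset

namespace LagAux

variable {u v : PowerSeries ℚ}

lemma coeff_pow_zero (hu : constantCoeff (R := ℚ) u = 0) {n k : ℕ} (h : n < k) :
    coeff (R := ℚ) n (u ^ k) = 0 := by
  have : (X : PowerSeries ℚ) ^ k ∣ u ^ k := pow_dvd_pow_of_dvd (X_dvd_iff.2 hu) k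
  exact X_pow_dvd_iff.1 this n h

lemma coeff_comp' (f u : PowerSeries ℚ) (n : ℕ) :
    coeff (R := ℚ) n (f.comp' u) = ∑ k ∈ range (n+1), coeff (R := ℚ) k f * coeff (R := ℚ) n (u ^ k) := by
  simp [PowerSeries.comp', coeff_mk, coeff_C_mul]

lemma coeff_comp'_ext (hu : constantCoeff (R := ℚ) u = 0) (f : PowerSeries ℚ) {n N : ℕ} (h : n < N) :
    coeff (R := ℚ) n (f.comp' u) = ∑ k ∈ range N, coeff (R := ℚ) k f * coeff (R := ℚ) n (u ^ k) := by
  rw [coeff_comp']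
  refine Finset.sum_subset (by intro x hx; simp at hx ⊢; omega) ?_
  intro k _ hk
  simp only [Finset.mem_range, not_lt] at hk
  rw [coeff_pow_zero hu (by omega), mul_zero]


lemma comp'_C (a : ℚ) (u : PowerSeries ℚ) : (C (R := ℚ) a).comp' u = C (R := ℚ) a := by
  ext n
  rw [coeff_comp']
  rcases Nat.eq_zero_or_pos n with h | h
  · subst h; simp
  · rw [Finset.sum_eq_single 0]
    · simp [coeff_C, h.ne']
    · intro k _ hk
      rw [coeff_C, if_neg hk, zero_mul]
    · simp

lemma comp'_X (hu : constantCoeff (R := ℚ) u = 0) : (X : PowerSeries ℚ).comp' u = u := by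
  ext n
  rw [coeff_comp']
  rcases Nat.eq_zero_or_pos n with h | h
  · subst h
    rw [← coeff_zero_eq_constantCoeff_apply] at hu
    simp [hu]
  · rw [Finset.sum_eq_single 1]
    · simp
    · intro k hk hk1
      rw [coeff_X, if_neg hk1, zero_mul]
    · intro h'; simp at h'; omega

lemma comp'_X_right (f : PowerSeries ℚ) : f.comp' X = f := by
  ext n
  rw [coeff_comp', Finset.sum_eq_single n]
  · simp
  · intro k hk hkn
    rw [← pow_one (X : PowerSeries ℚ), ← pow_mul, one_mul, coeff_X_pow, if_neg (by omega), mul_zero]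
  · simp

lemma comp'_add (f g u : PowerSeries ℚ) : (f + g).comp' u = f.comp' u + g.comp' u := by
  ext n
  simp [coeff_comp', add_mul, Finset.sum_add_distrib]

lemma comp'_one (u : PowerSeries ℚ) : (1 : PowerSeries ℚ).comp' u = 1 := by
  rw [← map_one (C (R := ℚ)), comp'_C, map_one]

lemma coeff_mul_congr {a a' b b' : PowerSeries ℚ} (n : ℕ)
    (ha : ∀ i ≤ n, coeff (R := ℚ) i a = coeff (R := ℚ) i a') (hb : ∀ i ≤ n, coeff (R := ℚ) i b = coeff (R := ℚ) i b') :
    coeff (R := ℚ) n (a * b) = coeff (R := ℚ) n (a' * b') := by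
  rw [coeff_mul, coeff_mul]
  refine Finset.sum_congr rfl fun p hp => ?_
  rw [HasAntidiagonal.mem_antidiagonal] at hp
  rw [ha p.1 (by omega), hb p.2 (by omega)]
lemma comp'_congr (u : PowerSeries ℚ) {f f' : PowerSeries ℚ} {n : ℕ}
    (h : ∀ k ≤ n, coeff (R := ℚ) k f = coeff (R := ℚ) k f') :
    coeff (R := ℚ) n (f.comp' u) = coeff (R := ℚ) n (f'.comp' u) := by
  rw [coeff_comp', coeff_comp']
  refine Finset.sum_congr rfl fun k hk => ?_
  rw [h k (by simp only [Finset.mem_range] at hk; omega)]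

lemma comp'_coe (hu : constantCoeff (R := ℚ) u = 0) (p : Polynomial ℚ) :
    (↑p : PowerSeries ℚ).comp' u = Polynomial.aeval u p := by
  ext n
  rw [coeff_comp']
  have e1 : (∑ k ∈ Finset.range (n+1), coeff (R := ℚ) k (↑p : PowerSeries ℚ) * coeff (R := ℚ) n (u ^ k))
      = ∑ k ∈ Finset.range (max (n+1) (p.natDegree+1)),
          coeff (R := ℚ) k (↑p : PowerSeries ℚ) * coeff (R := ℚ) n (u ^ k) :=
    Finset.sum_subset (Finset.range_subset_range.2 (le_max_left _ _)) (fun k _ hk => by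
      simp only [Finset.mem_range, not_lt] at hk
      rw [coeff_pow_zero hu (by omega), mul_zero])
  have h2 : ∀ k ∈ Finset.range (max (n+1) (p.natDegree+1)), k ∉ Finset.range (p.natDegree+1) →
      coeff (R := ℚ) n (p.coeff k • u ^ k) = 0 := by
    intro k _ hk
    simp only [Finset.mem_range, not_lt] at hk
    rw [Polynomial.coeff_eq_zero_of_natDegree_lt (by omega), zero_smul, map_zero]
  rw [e1, Polynomial.aeval_eq_sum_range, map_sum,
    Finset.sum_subset (Finset.range_subset_range.2 (le_max_right (n+1) (p.natDegree+1))) h2]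
  exact Finset.sum_congr rfl fun k _ => by rw [Polynomial.coeff_coe, coeff_smul, smul_eq_mul]

lemma comp'_mul (hu : constantCoeff (R := ℚ) u = 0) (f g : PowerSeries ℚ) :
    (f * g).comp' u = f.comp' u * g.comp' u := by
  ext n
  have h1 : ∀ k ≤ n, coeff (R := ℚ) k (f * g) =
      coeff (R := ℚ) k (↑(trunc (n+1) f * trunc (n+1) g) : PowerSeries ℚ) := by
    intro k hk
    rw [coeff_mul_eq_coeff_trunc_mul_trunc₂ (a := n+1) (b := n+1) f g (by omega) (by omega),
      ← Polynomial.coe_mul, Polynomial.coeff_coe]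
  rw [comp'_congr u h1, comp'_coe hu, map_mul]
  refine (coeff_mul_congr n ?_ ?_).symm
  · intro i hi
    rw [← comp'_coe hu]
    exact comp'_congr u fun k hk => by
      rw [Polynomial.coeff_coe, coeff_trunc, if_pos (by omega)]
  · intro i hi
    rw [← comp'_coe hu]
    exact comp'_congr u fun k hk => by
      rw [Polynomial.coeff_coe, coeff_trunc, if_pos (by omega)]
lemma comp'_pow (hv : constantCoeff (R := ℚ) v = 0) (u : PowerSeries ℚ) (k : ℕ) :
    (u ^ k).comp' v = (u.comp' v) ^ k := by
  induction k with
  | zero => simpa using comp'_one v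
  | succ k ih => rw [pow_succ, pow_succ, comp'_mul hv, ih]

lemma constantCoeff_comp' (f u : PowerSeries ℚ) :
    coeff (R := ℚ) 0 (f.comp' u) = coeff (R := ℚ) 0 f := by
  rw [coeff_comp']
  simp

lemma comp'_aeval (hu : constantCoeff (R := ℚ) u = 0) (hv : constantCoeff (R := ℚ) v = 0) (p : Polynomial ℚ) :
    (Polynomial.aeval u p).comp' v = Polynomial.aeval (u.comp' v) p := by
  induction p using Polynomial.induction_on with
  | C a => simp only [Polynomial.aeval_C]; exact comp'_C _ _
  | add p q hp hq => simp only [map_add, comp'_add, hp, hq]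
  | monomial m a ih =>
    simp only [map_mul, Polynomial.aeval_C, map_pow, Polynomial.aeval_X]
    have ha : (algebraMap ℚ (PowerSeries ℚ)) a = C (R := ℚ) a := rfl
    rw [ha, comp'_mul hv, comp'_C, comp'_pow hv]

lemma comp'_assoc (hu : constantCoeff (R := ℚ) u = 0) (hv : constantCoeff (R := ℚ) v = 0)
    (F : PowerSeries ℚ) : (F.comp' u).comp' v = F.comp' (u.comp' v) := by
  have hw : constantCoeff (R := ℚ) (u.comp' v) = 0 := by
    rw [← coeff_zero_eq_constantCoeff_apply] at hu ⊢
    rw [constantCoeff_comp', hu]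
  ext n
  have h1 : coeff (R := ℚ) n ((F.comp' u).comp' v)
      = coeff (R := ℚ) n (((↑(trunc (n+1) F) : PowerSeries ℚ).comp' u).comp' v) := by
    refine comp'_congr v fun k hk => comp'_congr u fun j hj => ?_
    rw [Polynomial.coeff_coe, coeff_trunc, if_pos (by omega)]
  have h2 : coeff (R := ℚ) n (F.comp' (u.comp' v))
      = coeff (R := ℚ) n ((↑(trunc (n+1) F) : PowerSeries ℚ).comp' (u.comp' v)) := by
    refine comp'_congr _ fun k hk => ?_
    rw [Polynomial.coeff_coe, coeff_trunc, if_pos (by omega)]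
  rw [h1, h2, comp'_coe hu, comp'_aeval hu hv, comp'_coe hw]

lemma coeff_pow_self (hu : constantCoeff (R := ℚ) u = 0) (n : ℕ) :
    coeff (R := ℚ) n (u ^ n) = (coeff (R := ℚ) 1 u) ^ n := by
  obtain ⟨v, hv⟩ := X_dvd_iff.2 hu
  subst hv
  have h1 : coeff (R := ℚ) 1 (X * v) = constantCoeff (R := ℚ) v := by
    rw [← pow_one (X : PowerSeries ℚ), coeff_X_pow_mul v 1 0,
      coeff_zero_eq_constantCoeff_apply]
  have h2 := coeff_X_pow_mul (v ^ n) n 0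
  rw [zero_add, coeff_zero_eq_constantCoeff_apply, map_pow] at h2
  rw [h1, mul_pow, h2]

lemma comp'_inj (hu0 : constantCoeff (R := ℚ) u = 0) (hu1 : coeff (R := ℚ) 1 u = 1) {f g : PowerSeries ℚ}
    (h : f.comp' u = g.comp' u) : f = g := by
  ext n
  induction n using Nat.strong_induction_on with
  | _ n ih =>
    have hc := congrArg (coeff (R := ℚ) n) h
    rw [coeff_comp', coeff_comp', Finset.sum_range_succ, Finset.sum_range_succ] at hc
    have he : ∑ k ∈ Finset.range n, coeff (R := ℚ) k f * coeff (R := ℚ) n (u ^ k)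
        = ∑ k ∈ Finset.range n, coeff (R := ℚ) k g * coeff (R := ℚ) n (u ^ k) :=
      Finset.sum_congr rfl fun k hk => by
        rw [ih k (Finset.mem_range.1 hk)]
    rw [he, coeff_pow_self hu0, hu1, one_pow, mul_one, mul_one] at hc
    exact add_left_cancel hc
lemma coeff_derivativeFun' (f : PowerSeries ℚ) (n : ℕ) :
    coeff (R := ℚ) n (derivativeFun f) = coeff (R := ℚ) (n + 1) f * (n + 1) := coeff_derivative f n

lemma derivativeFun_C' (a : ℚ) : derivativeFun (C (R := ℚ) a) = 0 := derivative_C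

lemma derivativeFun_X' : derivativeFun (X : PowerSeries ℚ) = 1 := by
  ext n
  rw [coeff_derivativeFun', coeff_one, coeff_X]
  rcases Nat.eq_zero_or_pos n with h | h
  · subst h; simp
  · rw [if_neg (by omega), if_neg (by omega), zero_mul]

lemma derivativeFun_pow (p : PowerSeries ℚ) (k : ℕ) :
    derivativeFun (p ^ (k+1)) = C (R := ℚ) (k+1) * p ^ k * derivativeFun p := by
  induction k with
  | zero => simp [pow_one]
  | succ k ih =>
    rw [pow_succ, derivativeFun_mul, ih, smul_eq_mul, smul_eq_mul]
    have hC : (C (R := ℚ)) ((k:ℚ) + 1 + 1) = (C (R := ℚ)) ((k:ℚ) + 1) + 1 := by rw [map_add, map_one]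
    push_cast
    rw [hC]
    ring

lemma lemmaR {g : PowerSeries ℚ} (hg : constantCoeff (R := ℚ) g = 1) (m : ℕ) (hm : 1 ≤ m) :
    coeff (R := ℚ) (m-1) ((g⁻¹) ^ m * derivativeFun (X * g)) = if m = 1 then 1 else 0 := by
  set h := g⁻¹ with hh
  have hg0 : constantCoeff (R := ℚ) g ≠ 0 := by rw [hg]; exact one_ne_zero
  have hgh : g * h = 1 := PowerSeries.mul_inv_cancel g hg0
  have hDphi : derivativeFun (X * g) = g + X * derivativeFun g := by
    rw [derivativeFun_mul, derivativeFun_X', smul_eq_mul, smul_eq_mul, mul_one, add_comm]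
  have hDh : derivativeFun h = - (h ^ 2 * derivativeFun g) := by
    have h0 : derivativeFun (g * h) = 0 := by rw [hgh, derivativeFun_one]
    rw [derivativeFun_mul, smul_eq_mul, smul_eq_mul] at h0
    linear_combination h * h0 - derivativeFun h * hgh
  rcases Nat.lt_or_ge m 2 with h2 | h2
  · -- m = 1
    have : m = 1 := by omega
    subst this
    simp only [if_pos rfl]
    rw [pow_one]
    have : (1:ℕ) - 1 = 0 := rfl
    rw [this, coeff_zero_eq_constantCoeff_apply, map_mul, hDphi]
    rw [map_add, map_mul, constantCoeff_X, zero_mul, add_zero]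
    rw [hh, PowerSeries.constantCoeff_inv, hg]
    norm_num
  · -- m ≥ 2
    rw [if_neg (by omega)]
    obtain ⟨m', rfl⟩ : ∃ m', m = m' + 2 := ⟨m - 2, by omega⟩
    have key : h ^ (m'+2) * derivativeFun (X * g)
        = h ^ (m'+1) - X * (C (R := ℚ) (1/(m'+1)) * derivativeFun (h ^ (m'+1))) := by
      rw [hDphi, mul_add]
      have e1 : h ^ (m'+2) * g = h ^ (m'+1) := by
        rw [pow_succ, mul_assoc, mul_comm h g, hgh, mul_one]
      rw [e1, derivativeFun_pow h m', hDh]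
      have hne : ((m':ℚ)+1) ≠ 0 := by positivity
      have hC : (C (R := ℚ)) (1/((m':ℚ)+1)) * (C (R := ℚ)) ((m':ℚ)+1) = 1 := by
        rw [← map_mul, one_div_mul_cancel hne, map_one]
      linear_combination (-(X * h^(m'+2) * derivativeFun g)) * hC
    rw [key, map_sub]
    have e3 : (m' + 2 - 1) = m' + 1 := rfl
    rw [e3, coeff_succ_X_mul, coeff_C_mul, coeff_derivativeFun']
    push_cast
    have hne : ((m':ℚ)+1) ≠ 0 := by positivity
    field_simp
    simp
lemma deriv_aeval (u : PowerSeries ℚ) (p : Polynomial ℚ) :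
    derivativeFun (Polynomial.aeval u p)
      = Polynomial.aeval u (Polynomial.derivative p) * derivativeFun u := by
  induction p using Polynomial.induction_on with
  | C a =>
    have ha : (Polynomial.aeval u) (Polynomial.C a) = C (R := ℚ) a := by rw [Polynomial.aeval_C]; rfl
    rw [ha, Polynomial.derivative_C, map_zero, zero_mul, derivativeFun_C']
  | add p q hp hq => rw [map_add, derivativeFun_add, hp, hq, map_add, map_add, add_mul]
  | monomial m a ih =>
    have ha : ∀ q : Polynomial ℚ, (Polynomial.aeval u) (Polynomial.C a * q)
        = C (R := ℚ) a * (Polynomial.aeval u) q := fun q => by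
      rw [map_mul, Polynomial.aeval_C]; rfl
    rw [ha, map_pow, Polynomial.aeval_X, Polynomial.derivative_C_mul,
      Polynomial.derivative_X_pow, derivativeFun_mul, derivativeFun_C', smul_zero, add_zero,
      smul_eq_mul, derivativeFun_pow u m, ha, map_mul, map_pow, Polynomial.aeval_X]
    have hc : (Polynomial.aeval u) (Polynomial.C ((m:ℚ)+1)) = C (R := ℚ) ((m:ℚ)+1) := by rw [Polynomial.aeval_C]; rfl
    push_cast
    rw [hc]
    ring

lemma deriv_comp' (hu : constantCoeff (R := ℚ) u = 0) (F : PowerSeries ℚ) :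
    derivativeFun (F.comp' u) = (derivativeFun F).comp' u * derivativeFun u := by
  ext n
  set P := trunc (n+2) F with hP
  have hPc : ∀ k ≤ n + 1, coeff (R := ℚ) k F = coeff (R := ℚ) k (↑P : PowerSeries ℚ) := fun k hk => by
    rw [Polynomial.coeff_coe, hP, coeff_trunc, if_pos (by omega)]
  have l1 : coeff (R := ℚ) n (derivativeFun (F.comp' u)) = coeff (R := ℚ) n (derivativeFun (Polynomial.aeval u P)) := by
    rw [coeff_derivativeFun', coeff_derivativeFun', ← comp'_coe hu, comp'_congr u (fun k hk => hPc k hk)]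
  rw [l1, deriv_aeval]
  refine coeff_mul_congr n (fun i hi => ?_) (fun i _ => rfl)
  rw [← comp'_coe hu]
  refine (comp'_congr u fun k hk => ?_).symm
  rw [Polynomial.coeff_coe, Polynomial.coeff_derivative, coeff_derivativeFun', hPc (k+1) (by omega),
    Polynomial.coeff_coe]

lemma lemmaS (hv : constantCoeff (R := ℚ) v = 0) (a W : PowerSeries ℚ) (n : ℕ) :
    coeff (R := ℚ) n (a.comp' v * W)
      = ∑ m ∈ Finset.range (n+1), coeff (R := ℚ) m a * coeff (R := ℚ) n (v ^ m * W) := by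
  rw [coeff_mul]
  have h1 : ∀ p ∈ HasAntidiagonal.antidiagonal n, coeff (R := ℚ) p.1 (a.comp' v) * coeff (R := ℚ) p.2 W
      = ∑ m ∈ Finset.range (n+1), coeff (R := ℚ) m a * (coeff (R := ℚ) p.1 (v ^ m) * coeff (R := ℚ) p.2 W) := by
    intro p hp
    rw [HasAntidiagonal.mem_antidiagonal] at hp
    rw [coeff_comp'_ext hv a (show p.1 < n + 1 by omega), Finset.sum_mul]
    exact Finset.sum_congr rfl fun m _ => by ring
  rw [Finset.sum_congr rfl h1, Finset.sum_comm]
  refine Finset.sum_congr rfl fun m _ => ?_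
  rw [← Finset.mul_sum, coeff_mul]

end LagAux

open LagAux Finset in
/-- Lagrange inversion, coefficient form: if `g(0) = 1`, `φ(t) = t·g(t)`, and `ψ` is the
compositional inverse of `φ` (i.e. `ψ(0) = 0` and `φ(ψ(t)) = t`), then for `n ≥ 1`,
`n·[t^n] f(ψ(t)) = [t^{n-1}] f'(t)·(1/g(t))^n`. -/
theorem lagrange_inversion (g f ψ : PowerSeries ℚ)
    (hg : PowerSeries.constantCoeff (R := ℚ) g = 1)
    (hψ0 : PowerSeries.constantCoeff (R := ℚ) ψ = 0)
    (hinv : PowerSeries.comp' (PowerSeries.X * g) ψ = PowerSeries.X)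
    (n : ℕ) (hn : 1 ≤ n) :
    (n : ℚ) * PowerSeries.coeff (R := ℚ) n (PowerSeries.comp' f ψ) =
      PowerSeries.coeff (R := ℚ) (n - 1) (PowerSeries.derivativeFun f * (g⁻¹) ^ n) := by
  set φ : PowerSeries ℚ := X * g with hφ
  set h : PowerSeries ℚ := g⁻¹ with hh
  have hg0 : constantCoeff (R := ℚ) g ≠ 0 := by rw [hg]; exact one_ne_zero
  have hgh : g * h = 1 := PowerSeries.mul_inv_cancel g hg0
  have hφ0 : constantCoeff (R := ℚ) φ = 0 := by
    rw [hφ, map_mul, constantCoeff_X, zero_mul]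
  -- ψ has linear coefficient 1
  have hsplit : φ.comp' ψ = ψ * g.comp' ψ := by
    rw [hφ, comp'_mul hψ0, comp'_X hψ0]
  have hψ1 : coeff (R := ℚ) 1 ψ = 1 := by
    have h1 : coeff (R := ℚ) 1 (ψ * g.comp' ψ) = coeff (R := ℚ) 1 (X : PowerSeries ℚ) := by
      rw [← hsplit, hinv]
    rw [coeff_one_X] at h1
    rw [coeff_mul, Finset.Nat.sum_antidiagonal_succ] at h1
    simp only [Finset.Nat.antidiagonal_zero, Finset.sum_singleton] at h1
    rw [constantCoeff_comp'] at h1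
    rw [show (coeff (R := ℚ) 0) ψ = 0 from by rw [coeff_zero_eq_constantCoeff_apply, hψ0], zero_mul,
      zero_add, coeff_zero_eq_constantCoeff_apply, hg, mul_one] at h1
    simpa using h1
  -- ψ ∘ φ = X
  have hleft : ψ.comp' φ = X := by
    refine comp'_inj hψ0 hψ1 ?_
    rw [comp'_assoc hφ0 hψ0, hinv, comp'_X_right, comp'_X hψ0]
  set F : PowerSeries ℚ := f.comp' ψ with hF
  have hfF : f = F.comp' φ := by
    rw [hF, comp'_assoc hψ0 hφ0, hleft, comp'_X_right]
  -- derivative of f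
  have hDf : derivativeFun f = (derivativeFun F).comp' φ * derivativeFun φ := by
    rw [hfF, deriv_comp' hφ0]
  rw [hDf, mul_assoc, lemmaS hφ0 (derivativeFun F) (derivativeFun φ * h ^ n) (n-1)]
  have hrange : n - 1 + 1 = n := by omega
  rw [hrange]
  have hterm : ∀ m ∈ Finset.range n,
      coeff (R := ℚ) m (derivativeFun F) * coeff (R := ℚ) (n-1) (φ ^ m * (derivativeFun φ * h ^ n))
        = coeff (R := ℚ) m (derivativeFun F) * (if m = n - 1 then 1 else 0) := by
    intro m hm
    rw [Finset.mem_range] at hm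
    congr 1
    have e1 : φ ^ m * (derivativeFun φ * h ^ n) = X ^ m * (h ^ (n - m) * derivativeFun φ) := by
      have e2 : g ^ m * h ^ n = h ^ (n - m) := by
        have : h ^ n = h ^ (n - m) * h ^ m := by rw [← pow_add]; congr 1; omega
        rw [this, ← mul_assoc, mul_comm (g ^ m), mul_assoc, ← mul_pow, hgh, one_pow, mul_one]
      calc φ ^ m * (derivativeFun φ * h ^ n)
          = X ^ m * ((g ^ m * h ^ n) * derivativeFun φ) := by rw [hφ, mul_pow]; ring
        _ = X ^ m * (h ^ (n - m) * derivativeFun φ) := by rw [e2]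
    rw [e1]
    have e3 : coeff (R := ℚ) (n-1) (X ^ m * (h ^ (n-m) * derivativeFun φ))
        = coeff (R := ℚ) (n-1-m) (h ^ (n-m) * derivativeFun φ) := by
      have := coeff_X_pow_mul (h ^ (n-m) * derivativeFun φ) m (n-1-m)
      rw [show n-1-m+m = n-1 by omega] at this
      exact this
    rw [e3, show n-1-m = (n-m)-1 by omega, lemmaR hg (n-m) (by omega)]
    congr 1
    simp only [eq_iff_iff]
    omega
  rw [Finset.sum_congr rfl hterm, Finset.sum_eq_single (n-1)
    (fun m _ hm => by rw [if_neg hm, mul_zero])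
    (fun hmem => absurd (Finset.mem_range.2 (by omega)) hmem)]
  rw [if_pos rfl, mul_one, coeff_derivativeFun', hrange, Nat.cast_sub hn]
  push_cast
  ring
end

section
/- Vertical recurrence for exponential Riordan arrays: with d, g ∈ ℚ[[t]], d(0)=g(0)=1, h(t)=t·g(t), and r_{n,k} := n!·[t^n] d(t)·h(t)^k/k!, setting h_i := i!·[t^i] g(t), one has for all n ≥ k ≥ 1: k·r_{n,k} = n · Σ_{i=0}^{n−k} C(n−1, i) · h_i · r_{n−1−i, k−1}. -/
open PowerSeries

/-- Vertical recurrence for exponential Riordan arrays: with `h = t·g` and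
`r_{n,k} = n!·[t^n] d·h^k/k!`, `h_i = i!·[t^i] g`, one has for `n ≥ k ≥ 1`:
`k·r_{n,k} = n·Σ_{i=0}^{n-k} C(n-1,i)·h_i·r_{n-1-i,k-1}`. -/
theorem riordan_vertical_recurrence (d g : PowerSeries ℚ)
    (hd : PowerSeries.constantCoeff d = 1)
    (hg : PowerSeries.constantCoeff g = 1)
    (r : ℕ → ℕ → ℚ)
    (hr : ∀ n k, r n k =
      (n.factorial : ℚ) * PowerSeries.coeff n (d * (PowerSeries.X * g) ^ k) /
        (k.factorial : ℚ))
    (n k : ℕ) (hk : 1 ≤ k) (hkn : k ≤ n) :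
    (k : ℚ) * r n k =
      (n : ℚ) * ∑ i ∈ Finset.range (n - k + 1),
        ((n - 1).choose i : ℚ) * ((i.factorial : ℚ) * PowerSeries.coeff i g) *
          r (n - 1 - i) (k - 1) := by
  obtain ⟨m, rfl⟩ : ∃ m, k = m + 1 := ⟨k - 1, (Nat.succ_pred_eq_of_pos hk).symm⟩
  obtain ⟨N, rfl⟩ : ∃ N, n = N + 1 :=
    ⟨n - 1, (Nat.succ_pred_eq_of_pos (hk.trans hkn)).symm⟩
  have hmN : m ≤ N := Nat.succ_le_succ_iff.mp hkn
  -- vanishing of low coefficients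
  have hvan : ∀ j, j < m → PowerSeries.coeff j (d * (X * g) ^ m) = 0 := by
    intro j hj
    have : d * (X * g) ^ m = X ^ m * (d * g ^ m) := by ring
    rw [this, coeff_X_pow_mul', if_neg (not_le.mpr hj)]
  -- key coefficient identity
  have key : PowerSeries.coeff (N + 1) (d * (X * g) ^ (m + 1))
      = ∑ i ∈ Finset.range (N - m + 1),
          PowerSeries.coeff i g * PowerSeries.coeff (N - i) (d * (X * g) ^ m) := by
    have h1 : d * (X * g) ^ (m + 1) = X * (g * (d * (X * g) ^ m)) := by ring
    rw [h1, coeff_succ_X_mul, coeff_mul,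
      Finset.Nat.sum_antidiagonal_eq_sum_range_succ_mk]
    symm
    apply Finset.sum_subset
    · exact Finset.range_subset_range.mpr (by omega)
    · intro i hi hni
      have hlt : N - i < m := by
        simp only [Finset.mem_range] at hi hni
        omega
      rw [hvan _ hlt, mul_zero]
  simp only [hr, Nat.add_sub_cancel, Nat.succ_sub_succ, Nat.sub_zero, key, Finset.mul_sum,
    Finset.sum_div, ← Finset.sum_mul]
  apply Finset.sum_congr rfl
  intro i hi
  simp only [Finset.mem_range] at hi
  have hiN : i ≤ N := by omega
  have hchoose : (N.choose i : ℚ) * i.factorial * (N - i).factorial = N.factorial := by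
    rw_mod_cast [Nat.choose_mul_factorial_mul_factorial hiN]
  have h1 : (m.factorial : ℚ) ≠ 0 := Nat.cast_ne_zero.mpr (Nat.factorial_ne_zero m)
  have h2 : ((m + 1).factorial : ℚ) = (m + 1) * m.factorial := by
    push_cast [Nat.factorial_succ]; ring
  have h3 : ((N + 1).factorial : ℚ) = (N + 1) * N.factorial := by
    push_cast [Nat.factorial_succ]; ring
  field_simp [h2, h3]
  rw [h2, h3, ← hchoose]; push_cast
  ring
end
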